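/- Let f be a C¹ function on [a,∞) with f' eventually of one sign and |f'| regularly varying of index ϑ > -1. If f(t) → ∞ as t → ∞, then f is normalized regularly varying of index ϑ + 1, i.e., t f'(t)/f(t) → ϑ + 1 as t → ∞. -/

import Mathlib

open Filter Real

open MeasureTheory Set

private lemma min_one_trick {a e : ℝ} (h : min a 1 ≤ e) (he : e < 1) : a ≤ e := by
  rcases le_or_gt a 1 with h1 | h1
  · rwa [min_eq_left h1] at h
  · rw [min_eq_right h1.le] at h; linarith

/-- Uniform convergence theorem for the additive form of regular variation. -/
lemma uct_add (h : ℝ → ℝ) (θ : ℝ) (hc : Continuous h)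
    (hp : ∀ s : ℝ, Tendsto (fun x => h (x + s) - h x) atTop (nhds (θ * s)))
    {ε : ℝ} (hε : 0 < ε) :
    ∃ X : ℝ, ∀ x ≥ X, ∀ s, 0 ≤ s → s ≤ 1 → |h (x + s) - h x - θ * s| ≤ ε := by
  set ε₁ : ℝ := min ε 1 / 2 with hε₁def
  have hε₁pos : 0 < ε₁ := by positivity
  have hε₁lt : ε₁ < 1 := by
    have : min ε 1 ≤ 1 := min_le_right _ _
    rw [hε₁def]; linarith
  have hε₁ε : 2 * ε₁ ≤ ε := by
    have : min ε 1 ≤ ε := min_le_left _ _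
    rw [hε₁def]; linarith
  -- the Egorov sequence
  set G : ℕ → ℝ → ℝ := fun n v =>
    ⨆ q : ℚ, min |h (max (q : ℝ) (n : ℝ) + v) - h (max (q : ℝ) (n : ℝ)) - θ * v| 1 with hGdef
  have hbdd : ∀ (n : ℕ) (v : ℝ), BddAbove (Set.range fun q : ℚ =>
      min |h (max (q : ℝ) (n : ℝ) + v) - h (max (q : ℝ) (n : ℝ)) - θ * v| 1) := by
    intro n v
    refine ⟨1, ?_⟩
    rintro _ ⟨q, rfl⟩
    exact min_le_right _ _
  have hGle : ∀ (n : ℕ) (v : ℝ) (b : ℝ),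
      (∀ q : ℚ, min |h (max (q : ℝ) (n : ℝ) + v) - h (max (q : ℝ) (n : ℝ)) - θ * v| 1 ≤ b) →
      G n v ≤ b := fun n v b hb => ciSup_le hb
  have hGge : ∀ (n : ℕ) (v : ℝ) (q : ℚ),
      min |h (max (q : ℝ) (n : ℝ) + v) - h (max (q : ℝ) (n : ℝ)) - θ * v| 1 ≤ G n v :=
    fun n v q => le_ciSup (hbdd n v) q
  have hGnonneg : ∀ (n : ℕ) (v : ℝ), 0 ≤ G n v := by
    intro n v
    refine le_trans ?_ (hGge n v 0)
    exact le_min (abs_nonneg _) zero_le_one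
  -- measurability
  have hGmeas : ∀ n : ℕ, StronglyMeasurable (G n) := by
    intro n
    apply Measurable.stronglyMeasurable
    apply Measurable.iSup
    intro q
    have : Continuous fun v : ℝ =>
        min |h (max (q : ℝ) (n : ℝ) + v) - h (max (q : ℝ) (n : ℝ)) - θ * v| 1 := by
      apply Continuous.min _ continuous_const
      apply Continuous.abs
      exact ((hc.comp (continuous_const.add continuous_id)).sub continuous_const).sub
        (continuous_const.mul continuous_id)
    exact this.measurable
  -- pointwise convergence to 0
  have hptw : ∀ v : ℝ, Tendsto (fun n : ℕ => G n v) atTop (nhds 0) := by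
    intro v
    rw [Metric.tendsto_atTop]
    intro δ hδ
    have h2 : Tendsto (fun x => h (x + v) - h x - θ * v) atTop (nhds 0) := by
      simpa using (hp v).sub_const (θ * v)
    have h3 : ∀ᶠ x in atTop, |h (x + v) - h x - θ * v| ≤ δ / 2 := by
      have := h2.abs
      rw [abs_zero] at this
      exact this.eventually_le_const (by linarith)
    obtain ⟨X, hX⟩ := eventually_atTop.1 h3
    refine ⟨⌈X⌉₊, fun n hn => ?_⟩
    have hG : G n v ≤ δ / 2 := by
      apply hGle
      intro q
      refine le_trans (min_le_left _ _) (hX _ ?_)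
      calc X ≤ (⌈X⌉₊ : ℝ) := Nat.le_ceil X
        _ ≤ (n : ℝ) := by exact_mod_cast hn
        _ ≤ max (q : ℝ) (n : ℝ) := le_max_right _ _
    rw [Real.dist_eq, sub_zero, abs_of_nonneg (hGnonneg n v)]
    linarith
  -- Egorov
  obtain ⟨t, hts, htm, htμ, hunif⟩ :=
    MeasureTheory.tendstoUniformlyOn_of_ae_tendsto (μ := volume) (s := Icc (0:ℝ) 2)
      hGmeas stronglyMeasurable_const measurableSet_Icc
      (by rw [Real.volume_Icc]; exact ENNReal.ofReal_ne_top)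
      (Eventually.of_forall fun v _ => hptw v) (ε := 1/4) (by norm_num)
  set E : Set ℝ := Icc (0:ℝ) 2 \ t with hEdef
  have hEm : MeasurableSet E := measurableSet_Icc.diff htm
  have hEsub : E ⊆ Icc (0:ℝ) 2 := diff_subset
  have hEμ : ENNReal.ofReal (7/4) ≤ volume E := by
    have h1 : volume (Icc (0:ℝ) 2) - volume t ≤ volume E := le_measure_diff
    have h2 : ENNReal.ofReal (7/4) ≤ volume (Icc (0:ℝ) 2) - volume t := by
      rw [Real.volume_Icc]
      calc ENNReal.ofReal (7/4) = ENNReal.ofReal (2 - 0) - ENNReal.ofReal (1/4) := by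
            rw [← ENNReal.ofReal_sub]; · norm_num
            · norm_num
        _ ≤ ENNReal.ofReal (2 - 0) - volume t := by
            exact tsub_le_tsub_left htμ _
    exact h2.trans h1
  -- uniform smallness on E
  rw [Metric.tendstoUniformlyOn_iff] at hunif
  obtain ⟨N, hN⟩ := eventually_atTop.1 (hunif ε₁ hε₁pos)
  have hEbound : ∀ v ∈ E, G N v ≤ ε₁ := by
    intro v hv
    have := hN N le_rfl v hv
    rw [dist_comm, Real.dist_eq, sub_zero, abs_of_nonneg (hGnonneg N v)] at this
    exact this.le
  -- from G N to all real base points x ≥ N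
  have hle_G : ∀ x : ℝ, (N : ℝ) ≤ x → ∀ v : ℝ,
      min |h (x + v) - h x - θ * v| 1 ≤ G N v := by
    intro x hx v
    rcases eq_or_lt_of_le hx with heq | hlt
    · have e : max ((N : ℚ) : ℝ) ((N : ℕ) : ℝ) = x := by
        push_cast
        rw [max_self, heq]
      have := hGge N v (N : ℚ)
      rwa [e] at this
    · have hq : ∀ k : ℕ, ∃ q : ℚ, (q : ℝ) ∈ Set.Ioo (max (N : ℝ) (x - ((k : ℝ) + 1)⁻¹)) x := by
        intro k
        apply exists_rat_btwn
        apply max_lt hlt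
        have : (0:ℝ) < ((k : ℝ) + 1)⁻¹ := by positivity
        linarith
      choose u hu using hq
      have hul : ∀ k : ℕ, x - ((k : ℝ) + 1)⁻¹ ≤ (u k : ℝ) :=
        fun k => ((le_max_right _ _).trans_lt (hu k).1).le
      have huu : ∀ k : ℕ, (u k : ℝ) ≤ x := fun k => (hu k).2.le
      have hulim : Tendsto (fun k : ℕ => (u k : ℝ)) atTop (nhds x) := by
        have hlow : Tendsto (fun k : ℕ => x - ((k : ℝ) + 1)⁻¹) atTop (nhds x) := by
          have : Tendsto (fun k : ℕ => ((k : ℝ) + 1)⁻¹) atTop (nhds 0) := by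
            simpa using tendsto_one_div_add_atTop_nhds_zero_nat (𝕜 := ℝ)
          simpa using tendsto_const_nhds.sub this
        exact tendsto_of_tendsto_of_tendsto_of_le_of_le hlow tendsto_const_nhds hul huu
      have hterm : ∀ k : ℕ, min |h ((u k : ℝ) + v) - h (u k : ℝ) - θ * v| 1 ≤ G N v := by
        intro k
        have e : max ((u k : ℝ)) ((N : ℕ) : ℝ) = (u k : ℝ) :=
          max_eq_left (le_of_lt (lt_of_le_of_lt (le_max_left _ _) (hu k).1))
        have := hGge N v (u k)
        rwa [e] at this
      have hcont2 : Tendsto (fun k : ℕ => min |h ((u k : ℝ) + v) - h (u k : ℝ) - θ * v| 1)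
          atTop (nhds (min |h (x + v) - h x - θ * v| 1)) := by
        have hc2 : Continuous fun y : ℝ => min |h (y + v) - h y - θ * v| 1 := by
          apply Continuous.min _ continuous_const
          apply Continuous.abs
          exact ((hc.comp (continuous_id.add continuous_const)).sub hc).sub continuous_const
        exact (hc2.tendsto x).comp hulim
      exact le_of_tendsto hcont2 (Eventually.of_forall hterm)
  have key2 : ∀ x : ℝ, (N : ℝ) ≤ x → ∀ v ∈ E, |h (x + v) - h x - θ * v| ≤ ε₁ :=
    fun x hx v hv => min_one_trick ((hle_G x hx v).trans (hEbound v hv)) hε₁lt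
  -- final combinatorial step
  refine ⟨(N : ℝ) + 2, fun x hx s hs0 hs1 => ?_⟩
  -- find w with w ∈ E and w + s ∈ E
  set B : Set ℝ := (fun w => w + s) ⁻¹' E with hBdef
  have hBm : MeasurableSet B := hEm.preimage (measurable_add_const s)
  have hBμ : volume B = volume E := measure_preimage_add_right volume s E
  have hsub : E ∪ B ⊆ Icc (-1 : ℝ) 2 := by
    rintro w (hw | hw)
    · exact ⟨by linarith [(hEsub hw).1], (hEsub hw).2⟩
    · have h2 : w + s ∈ Icc (0:ℝ) 2 := hEsub hw
      exact ⟨by linarith [h2.1], by linarith [h2.2]⟩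
  have hienonempty : (E ∩ B).Nonempty := by
    rcases Set.eq_empty_or_nonempty (E ∩ B) with hemp | hne
    · exfalso
      have heq := measure_union_add_inter (μ := volume) E hBm
      rw [hemp, measure_empty, add_zero, hBμ] at heq
      have hle3 : volume (E ∪ B) ≤ ENNReal.ofReal 3 := by
        refine le_trans (measure_mono hsub) ?_
        rw [Real.volume_Icc]; norm_num
      have : ENNReal.ofReal (7/4) + ENNReal.ofReal (7/4) ≤ ENNReal.ofReal 3 := by
        calc ENNReal.ofReal (7/4) + ENNReal.ofReal (7/4) ≤ volume E + volume E :=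
              add_le_add hEμ hEμ
          _ = volume (E ∪ B) := heq.symm
          _ ≤ ENNReal.ofReal 3 := hle3
      rw [← ENNReal.ofReal_add (by norm_num) (by norm_num),
        ENNReal.ofReal_le_ofReal_iff (by norm_num)] at this
      norm_num at this
    · exact hne
  obtain ⟨w, hwE, hwB⟩ := hienonempty
  have hwsE : w + s ∈ E := hwB
  have hw02 : w ∈ Icc (0:ℝ) 2 := hEsub hwE
  set y : ℝ := x - w with hydef
  have hyN : (N : ℝ) ≤ y := by
    have := hw02.2
    rw [hydef]; linarith
  have d1 := key2 y hyN w hwE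
  have d2 := key2 y hyN (w + s) hwsE
  have e : h (x + s) - h x - θ * s =
      (h (y + (w + s)) - h y - θ * (w + s)) - (h (y + w) - h y - θ * w) := by
    have e1 : y + (w + s) = x + s := by rw [hydef]; ring
    have e2 : y + w = x := by rw [hydef]; ring
    rw [e1, e2]; ring
  rw [e]
  calc |(h (y + (w + s)) - h y - θ * (w + s)) - (h (y + w) - h y - θ * w)|
      ≤ |h (y + (w + s)) - h y - θ * (w + s)| + |h (y + w) - h y - θ * w| := abs_sub _ _
    _ ≤ ε₁ + ε₁ := add_le_add d2 d1
    _ ≤ ε := by linarith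


lemma potter_add (h : ℝ → ℝ) (θ : ℝ) (hc : Continuous h)
    (hp : ∀ s : ℝ, Tendsto (fun x => h (x + s) - h x) atTop (nhds (θ * s)))
    {ε : ℝ} (hε : 0 < ε) :
    ∃ X : ℝ, ∀ x ≥ X, ∀ s, 0 ≤ s → |h (x + s) - h x - θ * s| ≤ (s + 1) * ε := by
  obtain ⟨X, hX⟩ := uct_add h θ hc hp hε
  have claim : ∀ k : ℕ, ∀ x ≥ X, ∀ s : ℝ, (k : ℝ) ≤ s → s ≤ (k : ℝ) + 1 →
      |h (x + s) - h x - θ * s| ≤ ((k : ℝ) + 1) * ε := by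
    intro k
    induction k with
    | zero =>
      intro x hx s h0 h1
      have := hX x hx s (by simpa using h0) (by simpa using h1)
      simpa using this
    | succ k ih =>
      intro x hx s h0 h1
      push_cast at h0 h1
      have e : h (x + s) - h x - θ * s =
          (h ((x + 1) + (s - 1)) - h (x + 1) - θ * (s - 1)) + (h (x + 1) - h x - θ * 1) := by
        rw [show (x + 1) + (s - 1) = x + s by ring]; ring
      have b1 := ih (x + 1) (by linarith) (s - 1) (by linarith) (by linarith)
      have b2 := hX x hx 1 zero_le_one le_rfl
      rw [e]
      calc |(h ((x + 1) + (s - 1)) - h (x + 1) - θ * (s - 1)) + (h (x + 1) - h x - θ * 1)|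
          ≤ |h ((x + 1) + (s - 1)) - h (x + 1) - θ * (s - 1)| + |h (x + 1) - h x - θ * 1| :=
            abs_add_le _ _
        _ ≤ ((k : ℝ) + 1) * ε + ε := add_le_add b1 b2
        _ = (((k : ℕ) + 1 : ℕ) + 1 : ℝ) * ε := by push_cast; ring
  refine ⟨X, fun x hx s hs0 => ?_⟩
  have h1 : ((⌊s⌋₊ : ℝ)) ≤ s := Nat.floor_le hs0
  have h2 : s ≤ (⌊s⌋₊ : ℝ) + 1 := (Nat.lt_floor_add_one s).le
  calc |h (x + s) - h x - θ * s| ≤ ((⌊s⌋₊ : ℝ) + 1) * ε := claim ⌊s⌋₊ x hx s h1 h2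
    _ ≤ (s + 1) * ε := by
        apply mul_le_mul_of_nonneg_right _ hε.le
        linarith

/-- Multiplicative Potter bounds. -/
lemma potter_mul (g : ℝ → ℝ) (θ : ℝ) (hgc : Continuous g) (T₀ : ℝ) (hT₀1 : 1 ≤ T₀)
    (hgpos : ∀ t ≥ T₀, 0 < g t)
    (hrv : ∀ l : ℝ, 0 < l → Tendsto (fun t => g (l * t) / g t) atTop (nhds (l ^ θ)))
    {ε : ℝ} (hε : 0 < ε) :
    ∃ T : ℝ, T₀ ≤ T ∧ ∀ s u : ℝ, T ≤ s → s ≤ u →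
      g s ≤ Real.exp ε * g u * (s / u) ^ (θ - ε) ∧
      Real.exp (-ε) * g u * (s / u) ^ (θ + ε) ≤ g s := by
  have hT₀pos : (0:ℝ) < T₀ := lt_of_lt_of_le zero_lt_one hT₀1
  set X₀ : ℝ := Real.log T₀ with hX₀def
  have hX₀ : Real.exp X₀ = T₀ := Real.exp_log hT₀pos
  set h : ℝ → ℝ := fun x => Real.log (g (Real.exp (max x X₀))) with hhdef
  have hinnerpos : ∀ x : ℝ, 0 < g (Real.exp (max x X₀)) := by
    intro x
    apply hgpos
    rw [← hX₀]
    exact Real.exp_le_exp.2 (le_max_right _ _)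
  have hc : Continuous h := by
    rw [hhdef]
    exact Continuous.log
      (hgc.comp (Real.continuous_exp.comp (continuous_id.max continuous_const)))
      (fun x => ne_of_gt (hinnerpos x))
  have hheq : ∀ v : ℝ, X₀ ≤ v → h v = Real.log (g (Real.exp v)) := by
    intro v hv
    rw [hhdef]
    simp [max_eq_left hv]
  have hp : ∀ s : ℝ, Tendsto (fun x => h (x + s) - h x) atTop (nhds (θ * s)) := by
    intro s
    have hl : (0:ℝ) < Real.exp s := Real.exp_pos s
    have h1 : Tendsto (fun x : ℝ => g (Real.exp s * Real.exp x) / g (Real.exp x)) atTop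
        (nhds ((Real.exp s) ^ θ)) := (hrv _ hl).comp Real.tendsto_exp_atTop
    have hposθ : (0:ℝ) < (Real.exp s) ^ θ := Real.rpow_pos_of_pos hl θ
    have h2 : Tendsto (fun x : ℝ => Real.log (g (Real.exp s * Real.exp x) / g (Real.exp x)))
        atTop (nhds (θ * s)) := by
      have h3 := ((Real.continuousAt_log (ne_of_gt hposθ)).tendsto.comp h1)
      rwa [Real.log_rpow hl, Real.log_exp] at h3
    apply h2.congr'
    filter_upwards [eventually_ge_atTop X₀, eventually_ge_atTop (X₀ - s)] with x hx1 hx2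
    have hgx : 0 < g (Real.exp x) := by
      apply hgpos; rw [← hX₀]; exact Real.exp_le_exp.2 hx1
    have hgxs : 0 < g (Real.exp (x + s)) := by
      apply hgpos; rw [← hX₀]; exact Real.exp_le_exp.2 (by linarith)
    rw [hheq x hx1, hheq (x + s) (by linarith), ← Real.log_div (ne_of_gt hgxs) (ne_of_gt hgx),
      Real.exp_add, mul_comm (Real.exp x) (Real.exp s)]
  obtain ⟨X, hX⟩ := potter_add h θ hc hp hε
  refine ⟨Real.exp (max X X₀), by rw [← hX₀]; exact Real.exp_le_exp.2 (le_max_right _ _),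
    fun s u hs hsu => ?_⟩
  set T : ℝ := Real.exp (max X X₀) with hTdef
  have hTT₀ : T₀ ≤ T := by rw [hTdef, ← hX₀]; exact Real.exp_le_exp.2 (le_max_right _ _)
  have hs0 : (0:ℝ) < s := lt_of_lt_of_le (lt_of_lt_of_le hT₀pos hTT₀) hs
  have hu0 : (0:ℝ) < u := lt_of_lt_of_le hs0 hsu
  have hgs : 0 < g s := hgpos s (le_trans hTT₀ hs)
  have hgu : 0 < g u := hgpos u (le_trans (le_trans hTT₀ hs) hsu)
  have hlogs : X ≤ Real.log s := by
    rw [← Real.log_exp X]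
    apply Real.log_le_log (Real.exp_pos X)
    exact le_trans (le_trans (Real.exp_le_exp.2 (le_max_left _ _)) le_rfl) hs
  have hlogsX₀ : X₀ ≤ Real.log s := by
    rw [← Real.log_exp X₀]
    apply Real.log_le_log (Real.exp_pos X₀)
    exact le_trans (Real.exp_le_exp.2 (le_max_right _ _)) hs
  have hloguX₀ : X₀ ≤ Real.log u := le_trans hlogsX₀ (Real.log_le_log hs0 hsu)
  have hσ : 0 ≤ Real.log u - Real.log s := by
    have := Real.log_le_log hs0 hsu; linarith
  have hpott := hX (Real.log s) hlogs (Real.log u - Real.log s) hσ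
  rw [show Real.log s + (Real.log u - Real.log s) = Real.log u by ring,
    hheq _ hlogsX₀, hheq _ hloguX₀, Real.exp_log hs0, Real.exp_log hu0] at hpott
  obtain ⟨hlo, hhi⟩ := abs_le.1 hpott
  have hsu0 : (0:ℝ) < s / u := div_pos hs0 hu0
  have hlogsu : Real.log (s / u) = Real.log s - Real.log u :=
    Real.log_div (ne_of_gt hs0) (ne_of_gt hu0)
  constructor
  · have hexp : Real.exp ε * g u * (s / u) ^ (θ - ε) =
        Real.exp (ε + Real.log (g u) + (Real.log s - Real.log u) * (θ - ε)) := by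
      rw [Real.rpow_def_of_pos hsu0, hlogsu, Real.exp_add, Real.exp_add, Real.exp_log hgu]
    rw [hexp, show g s = Real.exp (Real.log (g s)) from (Real.exp_log hgs).symm]
    apply Real.exp_le_exp.2
    nlinarith [hlo, hhi]
  · have hexp : Real.exp (-ε) * g u * (s / u) ^ (θ + ε) =
        Real.exp (-ε + Real.log (g u) + (Real.log s - Real.log u) * (θ + ε)) := by
      rw [Real.rpow_def_of_pos hsu0, hlogsu, Real.exp_add, Real.exp_add, Real.exp_log hgu]
    rw [hexp, show g s = Real.exp (Real.log (g s)) from (Real.exp_log hgs).symm]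
    apply Real.exp_le_exp.2
    nlinarith [hlo, hhi]

/-- `f` is regularly varying (at infinity) of index `θ`. -/
def RegVary (f : ℝ → ℝ) (θ : ℝ) : Prop :=
  ∀ l : ℝ, 0 < l → Filter.Tendsto (fun t => f (l * t) / f t) Filter.atTop (nhds (l ^ θ))

set_option maxHeartbeats 1000000 in
theorem nrv_of_deriv_rv_gt_neg_one (f : ℝ → ℝ) (θ : ℝ) (hθ : -1 < θ)
    (hf : ContDiff ℝ 1 f)
    (hsign : (∀ᶠ t in atTop, 0 < deriv f t) ∨ (∀ᶠ t in atTop, deriv f t < 0))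
    (hrv : RegVary (fun t => |deriv f t|) θ)
    (hinf : Tendsto f atTop atTop) :
    Tendsto (fun t => t * deriv f t / f t) atTop (nhds (θ + 1)) := by
  have hθ1 : (0:ℝ) < θ + 1 := by linarith
  set g := deriv f with hgdef
  have hdiff : Differentiable ℝ f := hf.differentiable one_ne_zero
  have contg : Continuous g := hf.continuous_deriv le_rfl
  -- eventual positivity of the derivative
  obtain ⟨T₀, hT₀1, hT₀pos⟩ : ∃ T₀ : ℝ, 1 ≤ T₀ ∧ ∀ t ≥ T₀, 0 < g t := by
    rcases hsign with hpos | hneg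
    · obtain ⟨a, ha⟩ := eventually_atTop.1 hpos
      exact ⟨max a 1, le_max_right _ _, fun t ht => ha t (le_trans (le_max_left _ _) ht)⟩
    · exfalso
      obtain ⟨a, ha⟩ := eventually_atTop.1 hneg
      have anti : StrictAntiOn f (Set.Ici a) := by
        apply strictAntiOn_of_deriv_neg (convex_Ici a) hf.continuous.continuousOn
        intro x hx
        rw [interior_Ici] at hx
        exact ha x hx.le
      obtain ⟨b, hba, hfb⟩ :=
        ((eventually_ge_atTop (a + 1)).and (hinf.eventually_ge_atTop (f a + 1))).exists
      have : f b < f a := anti Set.self_mem_Ici (by simp only [Set.mem_Ici]; linarith) (by linarith)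
      linarith
  have hT₀p : (0:ℝ) < T₀ := lt_of_lt_of_le zero_lt_one hT₀1
  -- regular variation of g itself
  have hrv' : ∀ l : ℝ, 0 < l → Tendsto (fun t => g (l * t) / g t) atTop (nhds (l ^ θ)) := by
    intro l hl
    apply (hrv l hl).congr'
    filter_upwards [eventually_ge_atTop T₀, eventually_ge_atTop (T₀ / l)] with t h1 h2
    have hg1 : 0 < g t := hT₀pos t h1
    have hg2 : 0 < g (l * t) := by
      apply hT₀pos
      rw [div_le_iff₀ hl] at h2
      linarith [mul_comm t l]
    simp only [abs_of_pos hg1, abs_of_pos hg2]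
  -- t * g t → ∞
  have hWinf : Tendsto (fun t => t * g t) atTop atTop := by
    obtain ⟨Ta, hTa0, hpa⟩ := potter_mul g θ contg T₀ hT₀1 hT₀pos hrv'
      (ε := (θ + 1) / 2) (by linarith)
    have hTa1 : 1 ≤ Ta := le_trans hT₀1 hTa0
    have hTap : (0:ℝ) < Ta := lt_of_lt_of_le zero_lt_one hTa1
    have hgTa : 0 < g Ta := hT₀pos Ta hTa0
    have hq1 : (0:ℝ) < (θ - (θ + 1) / 2) + 1 := by linarith
    set C₀ : ℝ := g Ta / (Real.exp ((θ + 1) / 2) * Ta ^ (θ - (θ + 1) / 2)) with hC₀def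
    have hC₀pos : 0 < C₀ := by
      rw [hC₀def]
      apply div_pos hgTa
      positivity
    apply tendsto_atTop_mono' atTop ?_ ((tendsto_rpow_atTop hq1).const_mul_atTop hC₀pos)
    filter_upwards [eventually_ge_atTop (max Ta 1)] with t ht
    have hTat : Ta ≤ t := le_trans (le_max_left _ _) ht
    have ht0 : (0:ℝ) < t := lt_of_lt_of_le zero_lt_one (le_trans (le_max_right _ _) ht)
    have hgt : 0 < g t := hT₀pos t (le_trans hTa0 hTat)
    have hb := (hpa Ta t le_rfl hTat).1
    rw [Real.div_rpow hTap.le ht0.le] at hb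
    have htq : (0:ℝ) < t ^ (θ - (θ + 1) / 2) := Real.rpow_pos_of_pos ht0 _
    have hTaq : (0:ℝ) < Ta ^ (θ - (θ + 1) / 2) := Real.rpow_pos_of_pos hTap _
    have hexp : (0:ℝ) < Real.exp ((θ + 1) / 2) := Real.exp_pos _
    have hmul : g Ta * t ^ (θ - (θ + 1) / 2) ≤
        (Real.exp ((θ + 1) / 2) * Ta ^ (θ - (θ + 1) / 2)) * g t := by
      calc g Ta * t ^ (θ - (θ + 1) / 2)
          ≤ (Real.exp ((θ + 1) / 2) * g t * (Ta ^ (θ - (θ + 1) / 2) / t ^ (θ - (θ + 1) / 2)))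
            * t ^ (θ - (θ + 1) / 2) := mul_le_mul_of_nonneg_right hb htq.le
        _ = (Real.exp ((θ + 1) / 2) * Ta ^ (θ - (θ + 1) / 2)) * g t := by
            field_simp
    rw [Real.rpow_add_one (ne_of_gt ht0)]
    have hpos2 : (0:ℝ) < Real.exp ((θ + 1) / 2) * Ta ^ (θ - (θ + 1) / 2) := by positivity
    calc C₀ * (t ^ (θ - (θ + 1) / 2) * t)
        = (g Ta * t ^ (θ - (θ + 1) / 2)) / (Real.exp ((θ + 1) / 2) * Ta ^ (θ - (θ + 1) / 2)) * t
          := by rw [hC₀def]; ring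
      _ ≤ g t * t := by
          apply mul_le_mul_of_nonneg_right _ ht0.le
          rw [div_le_iff₀ hpos2]
          linarith [hmul]
      _ = t * g t := mul_comm _ _
  -- main convergence of (f t - f T₀)/(t g t)
  have hMain : Tendsto (fun t => (f t - f T₀) / (t * g t)) atTop (nhds (1 / (θ + 1))) := by
    rw [Metric.tendsto_nhds]
    intro δ hδ
    have hUc : Tendsto (fun e : ℝ => Real.exp e / (θ + 1 - e)) (nhds 0) (nhds (1 / (θ + 1))) := by
      have h1 : ContinuousAt (fun e : ℝ => Real.exp e / (θ + 1 - e)) 0 := by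
        apply ContinuousAt.div Real.continuous_exp.continuousAt
          (continuous_const.sub continuous_id).continuousAt
        simpa using ne_of_gt hθ1
      have := h1.tendsto
      simpa using this
    have hLc : Tendsto (fun e : ℝ => Real.exp (-e) / (θ + 1 + e)) (nhds 0)
        (nhds (1 / (θ + 1))) := by
      have h1 : ContinuousAt (fun e : ℝ => Real.exp (-e) / (θ + 1 + e)) 0 := by
        apply ContinuousAt.div (Real.continuous_exp.comp continuous_neg).continuousAt
          (continuous_const.add continuous_id).continuousAt
        simpa using ne_of_gt hθ1
      have := h1.tendsto
      simpa using this
    have hev : ∀ᶠ e in nhdsWithin (0:ℝ) (Set.Ioi 0),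
        (Real.exp e / (θ + 1 - e) < 1 / (θ + 1) + δ / 2 ∧
          1 / (θ + 1) - δ / 4 < Real.exp (-e) / (θ + 1 + e)) ∧ e < (θ + 1) / 2 := by
      apply Filter.Eventually.filter_mono nhdsWithin_le_nhds
      exact ((hUc.eventually_lt_const (by linarith)).and
        (hLc.eventually_const_lt (by linarith))).and (eventually_lt_nhds (by linarith))
    obtain ⟨ε, ⟨⟨hU, hL⟩, hεhalf⟩, hεpos⟩ := (hev.and self_mem_nhdsWithin).exists
    obtain ⟨T, hTT₀, hpT⟩ := potter_mul g θ contg T₀ hT₀1 hT₀pos hrv' hεpos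
    have hT1 : 1 ≤ T := le_trans hT₀1 hTT₀
    have hrpos : (0:ℝ) < θ - ε + 1 := by linarith
    have hr2 : (0:ℝ) < θ + ε + 1 := by linarith
    have hτ : Tendsto (fun t : ℝ => T ^ (θ + ε + 1) * t ^ (-(θ + ε + 1))) atTop (nhds 0) := by
      have h0 := (tendsto_rpow_neg_atTop hr2).const_mul (T ^ (θ + ε + 1))
      simpa using h0
    filter_upwards [eventually_ge_atTop (max T 1),
      hτ.eventually_lt_const (show (0:ℝ) < (θ + 1) * (δ / 4) by positivity),
      hWinf.eventually_ge_atTop (4 * (|f T - f T₀| + 1) / δ)] with t ht1 ht2 ht3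
    have hTt : T ≤ t := le_trans (le_max_left _ _) ht1
    have ht0 : (0:ℝ) < t := lt_of_lt_of_le zero_lt_one (le_trans (le_max_right _ _) ht1)
    have hgt : 0 < g t := hT₀pos t (le_trans hTT₀ hTt)
    have hWt : 0 < t * g t := mul_pos ht0 hgt
    -- FTC
    have hftc : ∫ s in T..t, g s = f t - f T :=
      intervalIntegral.integral_deriv_eq_sub (fun x _ => hdiff x)
        (contg.intervalIntegrable T t)
    -- pointwise bounds
    have hpwu : ∀ s ∈ Set.Icc T t,
        g s ≤ (Real.exp ε * g t / t ^ (θ - ε)) * s ^ (θ - ε) := by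
      intro s hs
      have hs0 : (0:ℝ) < s := lt_of_lt_of_le (lt_of_lt_of_le zero_lt_one hT1) hs.1
      have hu := (hpT s t hs.1 hs.2).1
      rw [Real.div_rpow hs0.le ht0.le] at hu
      calc g s ≤ Real.exp ε * g t * (s ^ (θ - ε) / t ^ (θ - ε)) := hu
        _ = (Real.exp ε * g t / t ^ (θ - ε)) * s ^ (θ - ε) := by ring
    have hpwl : ∀ s ∈ Set.Icc T t,
        (Real.exp (-ε) * g t / t ^ (θ + ε)) * s ^ (θ + ε) ≤ g s := by
      intro s hs
      have hs0 : (0:ℝ) < s := lt_of_lt_of_le (lt_of_lt_of_le zero_lt_one hT1) hs.1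
      have hl := (hpT s t hs.1 hs.2).2
      rw [Real.div_rpow hs0.le ht0.le] at hl
      calc (Real.exp (-ε) * g t / t ^ (θ + ε)) * s ^ (θ + ε)
          = Real.exp (-ε) * g t * (s ^ (θ + ε) / t ^ (θ + ε)) := by ring
        _ ≤ g s := hl
    have hint : ∀ c r : ℝ, IntervalIntegrable (fun s : ℝ => c * s ^ r) volume T t := by
      intro c r
      apply ContinuousOn.intervalIntegrable
      apply ContinuousOn.mul continuousOn_const
      apply ContinuousOn.rpow_const continuousOn_id
      intro x hx
      rw [Set.uIcc_of_le hTt] at hx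
      exact Or.inl (ne_of_gt (lt_of_lt_of_le (lt_of_lt_of_le zero_lt_one hT1) hx.1))
    have hintg : IntervalIntegrable g volume T t := contg.intervalIntegrable T t
    -- upper estimate
    have hup : (f t - f T) / (t * g t) ≤ Real.exp ε / (θ + 1 - ε) := by
      have h1 : f t - f T ≤ (Real.exp ε * g t / t ^ (θ - ε)) *
          ((t ^ (θ - ε + 1) - T ^ (θ - ε + 1)) / (θ - ε + 1)) := by
        rw [← hftc]
        calc ∫ s in T..t, g s
            ≤ ∫ s in T..t, (Real.exp ε * g t / t ^ (θ - ε)) * s ^ (θ - ε) :=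
              intervalIntegral.integral_mono_on hTt hintg (hint _ _) hpwu
          _ = (Real.exp ε * g t / t ^ (θ - ε)) * ∫ s in T..t, s ^ (θ - ε) :=
              intervalIntegral.integral_const_mul _ _
          _ = _ := by rw [integral_rpow (Or.inl (by linarith : (-1:ℝ) < θ - ε))]
      have htr : (0:ℝ) < t ^ (θ - ε) := Real.rpow_pos_of_pos ht0 _
      have hTr : (0:ℝ) ≤ T ^ (θ - ε + 1) := Real.rpow_nonneg (by linarith) _
      have h2 : f t - f T ≤ Real.exp ε * g t * t / (θ + 1 - ε) := by
        calc f t - f T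
            ≤ (Real.exp ε * g t / t ^ (θ - ε)) *
              ((t ^ (θ - ε + 1) - T ^ (θ - ε + 1)) / (θ - ε + 1)) := h1
          _ ≤ (Real.exp ε * g t / t ^ (θ - ε)) * (t ^ (θ - ε + 1) / (θ - ε + 1)) := by
              apply mul_le_mul_of_nonneg_left _ (by positivity)
              exact (div_le_div_iff_of_pos_right hrpos).2 (by linarith)
          _ = Real.exp ε * g t * t / (θ + 1 - ε) := by
              have hne1 : θ - ε + 1 ≠ 0 := ne_of_gt hrpos
              have hne2 : θ + 1 - ε ≠ 0 := by intro hc; apply hne1; linarith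
              have hne3 : t ^ (θ - ε) ≠ 0 := ne_of_gt htr
              rw [Real.rpow_add_one (ne_of_gt ht0)]
              field_simp
              ring
      rw [div_le_div_iff₀ hWt (by linarith : (0:ℝ) < θ + 1 - ε)]
      rw [le_div_iff₀ (by linarith : (0:ℝ) < θ + 1 - ε)] at h2
      nlinarith [h2]
    -- lower estimate
    have hlo : 1 / (θ + 1) - δ / 2 ≤ (f t - f T) / (t * g t) := by
      set τ : ℝ := T ^ (θ + ε + 1) * t ^ (-(θ + ε + 1)) with hτdef
      have h1 : (Real.exp (-ε) * g t / t ^ (θ + ε)) *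
          ((t ^ (θ + ε + 1) - T ^ (θ + ε + 1)) / (θ + ε + 1)) ≤ f t - f T := by
        rw [← hftc]
        calc (Real.exp (-ε) * g t / t ^ (θ + ε)) *
            ((t ^ (θ + ε + 1) - T ^ (θ + ε + 1)) / (θ + ε + 1))
            = (Real.exp (-ε) * g t / t ^ (θ + ε)) * ∫ s in T..t, s ^ (θ + ε) := by
              rw [integral_rpow (Or.inl (by linarith : (-1:ℝ) < θ + ε))]
          _ = ∫ s in T..t, (Real.exp (-ε) * g t / t ^ (θ + ε)) * s ^ (θ + ε) :=
              (intervalIntegral.integral_const_mul _ _).symm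
          _ ≤ ∫ s in T..t, g s :=
              intervalIntegral.integral_mono_on hTt (hint _ _) hintg hpwl
      have htr : (0:ℝ) < t ^ (θ + ε) := Real.rpow_pos_of_pos ht0 _
      have heq : (Real.exp (-ε) * g t / t ^ (θ + ε)) *
          ((t ^ (θ + ε + 1) - T ^ (θ + ε + 1)) / (θ + ε + 1)) / (t * g t) =
          Real.exp (-ε) * (1 - τ) / (θ + ε + 1) := by
        have hne1 : θ + ε + 1 ≠ 0 := ne_of_gt hr2
        have hne3 : t ^ (θ + ε) ≠ 0 := ne_of_gt htr
        rw [hτdef, Real.rpow_neg ht0.le, Real.rpow_add_one (ne_of_gt ht0)]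
        field_simp
      have hτpos : (0:ℝ) ≤ τ := by rw [hτdef]; positivity
      have hτsmall : τ / (θ + 1) ≤ δ / 4 := by
        rw [div_le_iff₀ hθ1, hτdef]
        nlinarith [ht2]
      have hexps : Real.exp (-ε) ≤ 1 := Real.exp_le_one_iff.2 (by linarith)
      have hexpp : (0:ℝ) < Real.exp (-ε) := Real.exp_pos _
      have hstep : Real.exp (-ε) / (θ + 1 + ε) - δ / 4 ≤
          Real.exp (-ε) * (1 - τ) / (θ + ε + 1) := by
        have e1 : Real.exp (-ε) * (1 - τ) / (θ + ε + 1)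
            = Real.exp (-ε) / (θ + ε + 1) - Real.exp (-ε) * τ / (θ + ε + 1) := by
          ring
        have e2 : Real.exp (-ε) * τ / (θ + ε + 1) ≤ τ / (θ + 1) := by
          apply div_le_div₀ hτpos _ hθ1 (by linarith)
          nlinarith
        have e3 : Real.exp (-ε) / (θ + ε + 1) = Real.exp (-ε) / (θ + 1 + ε) := by ring_nf
        rw [e1, e3]
        linarith
      have hdiv : Real.exp (-ε) * (1 - τ) / (θ + ε + 1) ≤ (f t - f T) / (t * g t) := by
        rw [← heq]
        exact (div_le_div_iff_of_pos_right hWt).2 h1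
      linarith [hstep, hdiv, hL]
    -- conclusion at t
    rw [Real.dist_eq]
    have hdecomp : (f t - f T₀) / (t * g t) =
        (f T - f T₀) / (t * g t) + (f t - f T) / (t * g t) := by
      rw [← add_div]
      congr 1
      ring
    have hCb : |f T - f T₀| / (t * g t) ≤ δ / 4 := by
      rw [div_le_iff₀ hWt]
      rw [div_le_iff₀ hδ] at ht3
      nlinarith [abs_nonneg (f T - f T₀)]
    have habs : |(f T - f T₀) / (t * g t)| ≤ δ / 4 := by
      rw [abs_div, abs_of_pos hWt]
      exact hCb
    have hA : |(f t - f T) / (t * g t) - 1 / (θ + 1)| ≤ δ / 2 := by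
      rw [abs_le]
      constructor
      · linarith [hlo]
      · linarith [hup, hU]
    calc |(f t - f T₀) / (t * g t) - 1 / (θ + 1)|
        = |(f T - f T₀) / (t * g t) + ((f t - f T) / (t * g t) - 1 / (θ + 1))| := by
          rw [hdecomp]; ring_nf
      _ ≤ |(f T - f T₀) / (t * g t)| + |(f t - f T) / (t * g t) - 1 / (θ + 1)| := abs_add_le _ _
      _ ≤ δ / 4 + δ / 2 := add_le_add habs hA
      _ < δ := by linarith
  -- assembly
  have hbase : Tendsto (fun t => f T₀ / (t * g t)) atTop (nhds 0) :=
    Tendsto.div_atTop tendsto_const_nhds hWinf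
  have hfW : Tendsto (fun t => f t / (t * g t)) atTop (nhds (1 / (θ + 1))) := by
    have h0 := hbase.add hMain
    rw [zero_add] at h0
    apply h0.congr
    intro t
    rw [← add_div]
    congr 1
    ring
  have hne : (1 / (θ + 1) : ℝ) ≠ 0 := ne_of_gt (by positivity)
  have hinv := hfW.inv₀ hne
  rw [one_div, inv_inv] at hinv
  apply hinv.congr
  intro t
  rw [inv_div]
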